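/- arXiv:2104.08944 — 2 statements merged into one kernel-verified Lean document; each statement's English description precedes it below -/
import Mathlib

section
/- There is an absolute constant C such that for every N ≥ 2 and every finite sequence (X_n)_{1≤n≤N} of centered, square-integrable, complex-valued, independent random variables, the random trigonometric polynomial P_N(x) = ∑_{n=1}^N X_n e(nx) satisfies 𝔼(‖P_N‖_∞) ≤ C (∑_{n=1}^N V(X_n))^{1/2} √(log N), where V(X_n) denotes the variance 𝔼|X_n|² and ‖·‖_∞ is the supremum norm over 𝕋. -/
open Real Filter MeasureTheory ProbabilityTheory

lemma exp_le_quad {u : ℝ} (h : |u| ≤ 1) : Real.exp u ≤ 1 + u + u ^ 2 := by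
  have hb := Real.exp_bound h (by norm_num : 0 < 2)
  have hs : ∑ m ∈ Finset.range 2, u ^ m / (m.factorial : ℝ) = 1 + u := by
    simp [Finset.sum_range_succ]
  rw [hs] at hb
  have h2 : |u| ^ 2 * ((2:ℕ).succ / ((2:ℕ).factorial * (2:ℕ)) : ℝ) = u ^ 2 * (3/4) := by
    rw [sq_abs]; norm_num
  rw [h2] at hb
  have := abs_le.1 hb
  nlinarith [sq_nonneg u]

variable {Ω : Type*} [MeasurableSpace Ω] {P : Measure Ω} [IsProbabilityMeasure P]

/-- single mgf bound -/
lemma mgf_single {w : Ω → ℝ} {t v : ℝ} (hm : Measurable w)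
    (hi1 : Integrable w P) (hi2 : Integrable (fun ω => w ω ^ 2) P)
    (hw0 : ∫ ω, w ω ∂P = 0) (hb : ∀ ω, |t * w ω| ≤ 1)
    (hv2 : ∫ ω, w ω ^ 2 ∂P ≤ v) :
    ∫ ω, Real.exp (t * w ω) ∂P ≤ Real.exp (t ^ 2 * v) := by
  have hpt : ∀ ω, Real.exp (t * w ω) ≤ 1 + t * w ω + t ^ 2 * w ω ^ 2 := by
    intro ω
    calc Real.exp (t * w ω) ≤ 1 + t * w ω + (t * w ω) ^ 2 := exp_le_quad (hb ω)
    _ = 1 + t * w ω + t ^ 2 * w ω ^ 2 := by ring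
  have hInt : Integrable (fun ω => Real.exp (t * w ω)) P := by
    apply Integrable.mono' (g := fun _ => Real.exp 1) (integrable_const _)
      (Real.measurable_exp.comp (hm.const_mul t)).aestronglyMeasurable
    filter_upwards with ω
    simp only [Function.comp_apply, Real.norm_eq_abs, Real.abs_exp]
    exact Real.exp_le_exp.2 ((le_abs_self _).trans (hb ω))
  have h1 : Integrable (fun ω => 1 + t * w ω) P := (integrable_const 1).add (hi1.const_mul t)
  have h2 : Integrable (fun ω => t ^ 2 * w ω ^ 2) P := hi2.const_mul (t ^ 2)
  calc ∫ ω, Real.exp (t * w ω) ∂P ≤ ∫ ω, (1 + t * w ω + t ^ 2 * w ω ^ 2) ∂P :=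
        integral_mono hInt (h1.add h2) hpt
    _ = 1 + t * (∫ ω, w ω ∂P) + t ^ 2 * (∫ ω, w ω ^ 2 ∂P) := by
        rw [integral_add h1 h2, integral_add (integrable_const 1) (hi1.const_mul t),
          integral_const, integral_const_mul, integral_const_mul]
        simp
    _ = 1 + t ^ 2 * (∫ ω, w ω ^ 2 ∂P) := by rw [hw0]; ring
    _ ≤ 1 + t ^ 2 * v := by nlinarith [sq_nonneg t]
    _ ≤ Real.exp (t ^ 2 * v) := by
        have := Real.add_one_le_exp (t ^ 2 * v); linarith

/-- Jensen for log -/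
lemma jensen_log {g : Ω → ℝ} (hm : Measurable g) (hi : Integrable g P)
    (h1 : ∀ ω, 1 ≤ g ω) :
    ∫ ω, Real.log (g ω) ∂P ≤ Real.log (∫ ω, g ω ∂P) := by
  set c := ∫ ω, g ω ∂P with hc
  have hc1 : 1 ≤ c := by
    have : ∫ (_ : Ω), (1:ℝ) ∂P ≤ c := integral_mono (integrable_const 1) hi h1
    simpa using this
  have hcpos : 0 < c := lt_of_lt_of_le one_pos hc1
  have hilog : Integrable (fun ω => Real.log (g ω)) P := by
    apply Integrable.mono' hi (hm.log.aestronglyMeasurable)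
    filter_upwards with ω
    rw [Real.norm_eq_abs, abs_of_nonneg (Real.log_nonneg (h1 ω))]
    have := Real.log_le_sub_one_of_pos (lt_of_lt_of_le one_pos (h1 ω))
    linarith
  have hpt : ∀ ω, Real.log (g ω) ≤ g ω / c - 1 + Real.log c := by
    intro ω
    have hgpos : 0 < g ω := lt_of_lt_of_le one_pos (h1 ω)
    have h3 := Real.log_le_sub_one_of_pos (div_pos hgpos hcpos)
    have hlogdiv : Real.log (g ω / c) = Real.log (g ω) - Real.log c :=
      Real.log_div (ne_of_gt hgpos) (ne_of_gt hcpos)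
    rw [hlogdiv] at h3; linarith
  have hint1 : Integrable (fun ω => g ω / c - 1) P := (hi.div_const c).sub (integrable_const 1)
  calc ∫ ω, Real.log (g ω) ∂P ≤ ∫ ω, (g ω / c - 1 + Real.log c) ∂P :=
      integral_mono hilog (hint1.add (integrable_const _)) hpt
    _ = c / c - 1 + Real.log c := by
        rw [integral_add hint1 (integrable_const _),
          integral_sub (hi.div_const c) (integrable_const 1), integral_div, integral_const,
          integral_const]
        simp
        rfl
    _ = Real.log c := by rw [div_self (ne_of_gt hcpos)]; ring

/-- L1 ≤ sqrt L2 -/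
lemma int_le_sqrt_int_sq {h : Ω → ℝ}
    (hi1 : Integrable h P) (hi2 : Integrable (fun ω => h ω ^ 2) P) :
    ∫ ω, h ω ∂P ≤ Real.sqrt (∫ ω, h ω ^ 2 ∂P) := by
  set v := ∫ ω, h ω ^ 2 ∂P with hv
  have hv0 : 0 ≤ v := integral_nonneg fun ω => sq_nonneg _
  rcases eq_or_lt_of_le hv0 with hz | hpos
  · have h2z : (fun ω => h ω ^ 2) =ᵐ[P] 0 :=
      (integral_eq_zero_iff_of_nonneg (fun ω => sq_nonneg _) hi2).1 hz.symm
    have hh0 : h =ᵐ[P] 0 := by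
      filter_upwards [h2z] with ω hω
      have : h ω ^ 2 = 0 := hω
      exact pow_eq_zero_iff (n := 2) (by norm_num) |>.1 this
    rw [integral_congr_ae hh0]
    simp [Real.sqrt_nonneg]
  · set a := Real.sqrt v with ha
    have hapos : 0 < a := Real.sqrt_pos.2 hpos
    have ha2 : a ^ 2 = v := Real.sq_sqrt hv0
    have hpt : ∀ ω, h ω ≤ h ω ^ 2 / (2 * a) + a / 2 := by
      intro ω
      rw [div_add_div _ _ (by positivity) (by norm_num : (2:ℝ) ≠ 0),
        le_div_iff₀ (by positivity)]
      nlinarith [sq_nonneg (h ω - a)]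
    calc ∫ ω, h ω ∂P ≤ ∫ ω, (h ω ^ 2 / (2 * a) + a / 2) ∂P :=
        integral_mono hi1 ((hi2.div_const _).add (integrable_const _)) hpt
      _ = v / (2 * a) + a / 2 := by
          rw [integral_add (hi2.div_const _) (integrable_const _), integral_div, integral_const]
          simp
          rfl
      _ = a := by
          rw [← ha2]; field_simp; ring


noncomputable def eK (n : ℕ) (x : ℝ) : ℂ := Complex.exp (2 * Real.pi * Complex.I * (n * x))

lemma norm_eK (n : ℕ) (x : ℝ) : ‖eK n x‖ = 1 := by
  unfold eK
  rw [Complex.norm_exp]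
  have : (2 * (Real.pi:ℂ) * Complex.I * (n * x)).re = 0 := by
    simp [Complex.mul_re, Complex.mul_im]
  rw [this, Real.exp_zero]

lemma eK_fract (n : ℕ) (x : ℝ) : eK n x = eK n (Int.fract x) := by
  unfold eK
  have hx : (x:ℝ) = Int.fract x + (⌊x⌋ : ℝ) := by
    rw [Int.fract]; ring
  conv_lhs => rw [hx]
  push_cast
  rw [show 2 * (Real.pi:ℂ) * Complex.I * (n * (Int.fract x + (⌊x⌋:ℤ)))
      = 2 * (Real.pi:ℂ) * Complex.I * (n * Int.fract x)
        + ((n * ⌊x⌋ : ℤ) : ℂ) * (2 * Real.pi * Complex.I) by push_cast; ring,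
    Complex.exp_add, Complex.exp_int_mul_two_pi_mul_I, mul_one]

lemma eK_diff {n : ℕ} {x y : ℝ} (h : 2 * Real.pi * n * |x - y| ≤ 1) :
    ‖eK n x - eK n y‖ ≤ 4 * Real.pi * n * |x - y| := by
  have key : eK n x - eK n y = eK n y * (Complex.exp (2 * Real.pi * Complex.I * (n * (x - y))) - 1) := by
    unfold eK
    rw [mul_sub, mul_one, ← Complex.exp_add]
    congr 1
    push_cast; ring
  rw [key, norm_mul, norm_eK, one_mul]
  have habs : ‖(2 * Real.pi * Complex.I * (n * ((x:ℝ) - y)) : ℂ)‖ = 2 * Real.pi * n * |x - y| := by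
    rw [show (2 * (Real.pi:ℂ) * Complex.I * (n * ((x:ℝ) - y)))
        = (((2 * Real.pi * n * (x - y) : ℝ)):ℂ) * Complex.I by push_cast; ring]
    rw [norm_mul, Complex.norm_I, mul_one, Complex.norm_real, Real.norm_eq_abs, abs_mul]
    have : |2 * Real.pi * (n:ℝ)| = 2 * Real.pi * n := by
      rw [abs_of_nonneg]; positivity
    rw [this]
  have h2 := Complex.norm_exp_sub_one_le (x := 2 * Real.pi * Complex.I * (n * ((x:ℝ) - y))) (by rw [habs]; exact h)
  rw [habs] at h2
  calc ‖Complex.exp (2 * Real.pi * Complex.I * (n * ((x:ℝ) - y))) - 1‖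
      ≤ 2 * (2 * Real.pi * n * |x - y|) := h2
    _ = 4 * Real.pi * n * |x - y| := by ring


set_option maxHeartbeats 2000000 in
lemma sz_main (Ω : Type) [MeasurableSpace Ω] (P : Measure Ω) [hP : IsProbabilityMeasure P]
    (X : ℕ → Ω → ℂ) (hXm : ∀ n, Measurable (X n))
    (hXi : iIndepFun X P)
    (hX2 : ∀ n, MemLp (X n) 2 P) (hX0 : ∀ n, ∫ ω, X n ω ∂P = 0)
    (N : ℕ) (hN : 2 ≤ N)
    (hS : 0 < ∑ n ∈ Finset.Icc 1 N, ∫ ω, ‖X n ω‖ ^ 2 ∂P) :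
    (∫ ω, (⨆ x : ℝ, ‖∑ n ∈ Finset.Icc 1 N,
        X n ω * Complex.exp (2 * Real.pi * Complex.I * (n * x))‖) ∂P)
      ≤ 100 * Real.sqrt (∑ n ∈ Finset.Icc 1 N, ∫ ω, ‖X n ω‖ ^ 2 ∂P) *
          Real.sqrt (Real.log N) := by
  have hIntX : ∀ n, Integrable (X n) P := fun n => (hX2 n).integrable (by norm_num)
  have hIntnX : ∀ n, Integrable (fun ω => ‖X n ω‖) P := fun n => (hIntX n).norm
  have hIntX2 : ∀ n, Integrable (fun ω => ‖X n ω‖ ^ 2) P := by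
    intro n
    have := (hX2 n).integrable_norm_rpow (p := 2) (by norm_num) (by norm_num)
    apply this.congr
    filter_upwards with ω
    norm_num
  set V : ℕ → ℝ := fun n => ∫ ω, ‖X n ω‖ ^ 2 ∂P with hVdef
  set S : ℝ := ∑ n ∈ Finset.Icc 1 N, V n with hSdef
  have hV0 : ∀ n, 0 ≤ V n := fun n => integral_nonneg fun ω => sq_nonneg _
  have hL : 0 < Real.log N :=
    Real.log_pos (by exact_mod_cast lt_of_lt_of_le one_lt_two hN)
  set L : ℝ := Real.log N with hLdef
  have hXle : ∀ n, ∫ ω, ‖X n ω‖ ∂P ≤ Real.sqrt (V n) :=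
    fun n => int_le_sqrt_int_sq (hIntnX n) (hIntX2 n)
  -- parameters
  set l : ℝ := Real.sqrt L / Real.sqrt S with hldef
  have hsS : 0 < Real.sqrt S := Real.sqrt_pos.2 hS
  have hsL : 0 < Real.sqrt L := Real.sqrt_pos.2 hL
  have hl : 0 < l := div_pos hsL hsS
  have hl2 : l ^ 2 * S = L := by
    rw [hldef, div_pow, Real.sq_sqrt hL.le, Real.sq_sqrt hS.le]
    field_simp
  set T : ℝ := 1 / (2 * l) with hTdef
  have hT : 0 < T := by rw [hTdef]; exact one_div_pos.2 (by linarith)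
  set M : ℕ := 7 * N ^ 2 with hMdef
  have hM : 0 < M := by positivity
  have hMr : (M : ℝ) = 7 * (N:ℝ) ^ 2 := by push_cast [hMdef]; ring
  have hNr : (2:ℝ) ≤ (N:ℝ) := by exact_mod_cast hN
  -- truncation
  set tr : ℂ → ℂ := fun z => if ‖z‖ ≤ T then z else 0 with htrdef
  have htrm : Measurable tr :=
    Measurable.ite (measurableSet_le measurable_norm measurable_const)
      measurable_id measurable_const
  have htrle : ∀ z, ‖tr z‖ ≤ ‖z‖ := by
    intro z; rw [htrdef]; dsimp only
    split <;> simp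
  have htrb : ∀ z, ‖tr z‖ ≤ T := by
    intro z; rw [htrdef]; dsimp only
    split
    · assumption
    · simpa using hT.le
  have hIntTr : ∀ n, Integrable (fun ω => tr (X n ω)) P := by
    intro n
    exact Integrable.mono' (integrable_const T)
      ((htrm.comp (hXm n)).aestronglyMeasurable)
      (Filter.Eventually.of_forall fun ω => htrb _)
  set c : ℕ → ℂ := fun n => ∫ ω, tr (X n ω) ∂P with hcdef
  have hcT : ∀ n, ‖c n‖ ≤ T := by
    intro n
    calc ‖c n‖ ≤ ∫ ω, ‖tr (X n ω)‖ ∂P := norm_integral_le_integral_norm _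
      _ ≤ ∫ (_ : Ω), T ∂P :=
          integral_mono (hIntTr n).norm (integrable_const T)
            (fun ω => htrb _)
      _ = T := by simp
  have hcX : ∀ n, ‖c n‖ ≤ ∫ ω, ‖X n ω‖ ∂P := by
    intro n
    calc ‖c n‖ ≤ ∫ ω, ‖tr (X n ω)‖ ∂P := norm_integral_le_integral_norm _
      _ ≤ ∫ ω, ‖X n ω‖ ∂P :=
          integral_mono (hIntTr n).norm (hIntnX n) (fun ω => htrle _)
  have hcV : ∀ n, ‖c n‖ ≤ Real.sqrt (V n) := fun n => (hcX n).trans (hXle n)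
  set Y : ℕ → Ω → ℂ := fun n ω => tr (X n ω) - c n with hYdef
  have hYm : ∀ n, Measurable (Y n) := fun n => (htrm.comp (hXm n)).sub measurable_const
  have hYb : ∀ n ω, ‖Y n ω‖ ≤ 2 * T := by
    intro n ω
    calc ‖Y n ω‖ ≤ ‖tr (X n ω)‖ + ‖c n‖ := norm_sub_le _ _
      _ ≤ T + T := add_le_add (htrb _) (hcT n)
      _ = 2 * T := by ring
  have hIntY : ∀ n, Integrable (Y n) P := fun n => (hIntTr n).sub (integrable_const _)
  have hY0 : ∀ n, ∫ ω, Y n ω ∂P = 0 := by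
    intro n
    rw [hYdef]
    rw [integral_sub (hIntTr n) (integrable_const _), integral_const]
    simp [hcdef]
  have hIntnY : ∀ n, Integrable (fun ω => ‖Y n ω‖) P := fun n => (hIntY n).norm
  have hIntY2 : ∀ n, Integrable (fun ω => ‖Y n ω‖ ^ 2) P := by
    intro n
    refine Integrable.mono' (integrable_const ((2*T)^2))
      (((hYm n).norm.pow_const 2).aestronglyMeasurable)
      (Filter.Eventually.of_forall fun ω => ?_)
    rw [Real.norm_eq_abs, abs_of_nonneg (sq_nonneg _)]
    exact pow_le_pow_left₀ (norm_nonneg _) (hYb n ω) 2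
  have hYsq : ∀ n, ∫ ω, ‖Y n ω‖ ^ 2 ∂P ≤ 4 * V n := by
    intro n
    have hpt : ∀ ω, ‖Y n ω‖ ^ 2 ≤ 2 * ‖X n ω‖ ^ 2 + 2 * V n := by
      intro ω
      have h1 : ‖Y n ω‖ ≤ ‖tr (X n ω)‖ + ‖c n‖ := norm_sub_le _ _
      have h2 : ‖tr (X n ω)‖ ≤ ‖X n ω‖ := htrle _
      have h3 : ‖c n‖ ^ 2 ≤ V n := by
        have := hcV n
        nlinarith [norm_nonneg (c n), Real.sq_sqrt (hV0 n), Real.sqrt_nonneg (V n)]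
      have h4 : ‖Y n ω‖ ^ 2 ≤ (‖X n ω‖ + ‖c n‖) ^ 2 :=
        pow_le_pow_left₀ (norm_nonneg _) (h1.trans (by linarith)) 2
      nlinarith [sq_nonneg (‖X n ω‖ - ‖c n‖)]
    calc ∫ ω, ‖Y n ω‖ ^ 2 ∂P ≤ ∫ ω, (2 * ‖X n ω‖ ^ 2 + 2 * V n) ∂P :=
        integral_mono (hIntY2 n) (((hIntX2 n).const_mul 2).add (integrable_const _)) hpt
      _ = 2 * V n + 2 * V n := by
          rw [integral_add ((hIntX2 n).const_mul 2) (integrable_const _),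
            integral_const_mul, integral_const]
          simp [hVdef]
      _ = 4 * V n := by ring
  -- remainder
  set R : ℕ → Ω → ℂ := fun n ω => X n ω - Y n ω with hRdef
  have hIntnR : ∀ n, Integrable (fun ω => ‖R n ω‖) P :=
    fun n => ((hIntX n).sub (hIntY n)).norm
  have hRle : ∀ n, ∫ ω, ‖R n ω‖ ∂P ≤ 4 * l * V n := by
    intro n
    have hXtr : ∀ ω, ‖X n ω - tr (X n ω)‖ ≤ ‖X n ω‖ ^ 2 / T := by
      intro ω
      rw [htrdef]
      dsimp only
      split
      · simp [div_nonneg (sq_nonneg _) hT.le]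
      · rename_i h
        push_neg at h
        rw [sub_zero, le_div_iff₀ hT]
        nlinarith [norm_nonneg (X n ω)]
    have hIntXtr : Integrable (fun ω => ‖X n ω - tr (X n ω)‖) P :=
      ((hIntX n).sub (hIntTr n)).norm
    have hXtrInt : ∫ ω, ‖X n ω - tr (X n ω)‖ ∂P ≤ V n / T := by
      calc ∫ ω, ‖X n ω - tr (X n ω)‖ ∂P ≤ ∫ ω, ‖X n ω‖ ^ 2 / T ∂P :=
          integral_mono hIntXtr ((hIntX2 n).div_const T) hXtr
        _ = V n / T := by rw [integral_div]
    have hc2 : ‖c n‖ ≤ V n / T := by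
      have hceq : c n = ∫ ω, (tr (X n ω) - X n ω) ∂P := by
        rw [integral_sub (hIntTr n) (hIntX n), hX0 n, sub_zero, hcdef]
      calc ‖c n‖ ≤ ∫ ω, ‖tr (X n ω) - X n ω‖ ∂P := by
            rw [hceq]; exact norm_integral_le_integral_norm _
        _ = ∫ ω, ‖X n ω - tr (X n ω)‖ ∂P := by
            congr 1; funext ω; rw [norm_sub_rev]
        _ ≤ V n / T := hXtrInt
    have hpt : ∀ ω, ‖R n ω‖ ≤ ‖X n ω - tr (X n ω)‖ + ‖c n‖ := by
      intro ω
      rw [hRdef, hYdef]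
      dsimp only
      have he : X n ω - (tr (X n ω) - c n) = (X n ω - tr (X n ω)) + c n := by ring
      rw [he]
      exact norm_add_le _ _
    have hfin : ∫ ω, ‖R n ω‖ ∂P ≤ V n / T + ‖c n‖ := by
      calc ∫ ω, ‖R n ω‖ ∂P ≤ ∫ ω, (‖X n ω - tr (X n ω)‖ + ‖c n‖) ∂P :=
          integral_mono (hIntnR n) (hIntXtr.add (integrable_const _)) hpt
        _ = (∫ ω, ‖X n ω - tr (X n ω)‖ ∂P) + ‖c n‖ := by
            rw [integral_add hIntXtr (integrable_const _), integral_const]; simp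
        _ ≤ V n / T + ‖c n‖ := by linarith
    have hTV : V n / T = 2 * l * V n := by
      rw [hTdef]
      field_simp
    rw [hTV] at hfin hc2
    linarith
  -- grid polynomial
  set W : ℕ → Ω → ℂ := fun j ω => ∑ n ∈ Finset.Icc 1 N, Y n ω * eK n ((j:ℝ) / M) with hWdef
  have hWm : ∀ j, Measurable (W j) :=
    fun j => Finset.measurable_sum _ fun n _ => (hYm n).mul_const _
  set U : (ℂ →L[ℝ] ℝ) → Ω → ℝ := fun φ ω => ∑ j ∈ Finset.range (M+1),
    (Real.exp (l * φ (W j ω)) + Real.exp (-(l * φ (W j ω)))) with hUdef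
  have hUm : ∀ φ, Measurable (U φ) := by
    intro φ
    apply Finset.measurable_sum
    intro j _
    exact ((measurable_exp.comp ((φ.measurable.comp (hWm j)).const_mul l)).add
      (measurable_exp.comp (((φ.measurable.comp (hWm j)).const_mul l).neg)))
  have hU1 : ∀ φ ω, 1 ≤ U φ ω := by
    intro φ ω
    have : ∀ j ∈ Finset.range (M+1), (2:ℝ) ≤
        Real.exp (l * φ (W j ω)) + Real.exp (-(l * φ (W j ω))) := by
      intro j _
      have h1 := Real.add_one_le_exp (l * φ (W j ω))
      have h2 := Real.add_one_le_exp (-(l * φ (W j ω)))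
      linarith
    have h2 : (2:ℝ) * (M+1) ≤ U φ ω := by
      calc (2:ℝ) * (M+1) = ∑ _j ∈ Finset.range (M+1), (2:ℝ) := by
            rw [Finset.sum_const, Finset.card_range, nsmul_eq_mul]; push_cast; ring
        _ ≤ U φ ω := Finset.sum_le_sum this
    nlinarith [Nat.cast_nonneg (α := ℝ) M]
  -- mgf bound
  have hmgfb : ∀ (φ : ℂ →L[ℝ] ℝ), (∀ z, |φ z| ≤ ‖z‖) → ∀ (j : ℕ) (t : ℝ),
      t ^ 2 = l ^ 2 → |t| ≤ l →
      ∫ ω, Real.exp (t * φ (W j ω)) ∂P ≤ Real.exp (4 * L) := by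
    intro φ hφ j t ht2 htl
    set w : ℕ → Ω → ℝ := fun n ω => φ (Y n ω * eK n ((j:ℝ)/M)) with hwdef
    have hwm : ∀ n, Measurable (w n) := fun n => φ.measurable.comp ((hYm n).mul_const _)
    have hwY : ∀ n ω, |w n ω| ≤ ‖Y n ω‖ := by
      intro n ω
      calc |w n ω| ≤ ‖Y n ω * eK n ((j:ℝ)/M)‖ := hφ _
        _ = ‖Y n ω‖ := by rw [norm_mul, norm_eK, mul_one]
    have hwb : ∀ n ω, |w n ω| ≤ 2 * T := fun n ω => (hwY n ω).trans (hYb n ω)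
    have hwi : ∀ n, Integrable (w n) P := by
      intro n
      refine Integrable.mono' (integrable_const (2*T)) (hwm n).aestronglyMeasurable
        (Filter.Eventually.of_forall fun ω => ?_)
      rw [Real.norm_eq_abs]; exact hwb n ω
    have hwi2 : ∀ n, Integrable (fun ω => w n ω ^ 2) P := by
      intro n
      refine Integrable.mono' (integrable_const ((2*T)^2))
        (((hwm n).pow_const 2).aestronglyMeasurable)
        (Filter.Eventually.of_forall fun ω => ?_)
      rw [Real.norm_eq_abs, abs_of_nonneg (sq_nonneg _), ← sq_abs]
      exact pow_le_pow_left₀ (abs_nonneg _) (hwb n ω) 2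
    have hw0 : ∀ n, ∫ ω, w n ω ∂P = 0 := by
      intro n
      have hIY : Integrable (fun ω => Y n ω * eK n ((j:ℝ)/M)) P := (hIntY n).mul_const _
      rw [hwdef]
      dsimp only
      rw [φ.integral_comp_comm hIY, integral_mul_const, hY0 n, zero_mul, map_zero]
    have hwsq : ∀ n, ∫ ω, w n ω ^ 2 ∂P ≤ 4 * V n := by
      intro n
      refine le_trans (integral_mono (hwi2 n) (hIntY2 n) fun ω => ?_) (hYsq n)
      calc w n ω ^ 2 = |w n ω| ^ 2 := (sq_abs _).symm
        _ ≤ ‖Y n ω‖ ^ 2 := pow_le_pow_left₀ (abs_nonneg _) (hwY n ω) 2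
    have hbnd : ∀ n, ∀ ω, |t * w n ω| ≤ 1 := by
      intro n ω
      rw [abs_mul]
      calc |t| * |w n ω| ≤ l * (2 * T) :=
          mul_le_mul htl (hwb n ω) (abs_nonneg _) hl.le
        _ = 1 := by rw [hTdef]; field_simp
    have hindep : iIndepFun w P := by
      have h := hXi.comp (fun n z => φ ((tr z - c n) * eK n ((j:ℝ)/M)))
        (fun n => φ.measurable.comp ((htrm.sub measurable_const).mul_const _))
      exact h
    have hsum : ∀ ω, φ (W j ω) = (∑ n ∈ Finset.Icc 1 N, w n) ω := by
      intro ω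
      rw [hWdef]
      dsimp only
      rw [map_sum, Finset.sum_apply]
    have heq : (fun ω => Real.exp (t * φ (W j ω)))
        = fun ω => Real.exp (t * (∑ n ∈ Finset.Icc 1 N, w n) ω) := by
      funext ω; rw [hsum ω]
    have hmgf : ∫ ω, Real.exp (t * φ (W j ω)) ∂P = mgf (∑ n ∈ Finset.Icc 1 N, w n) P t := by
      rw [mgf, heq]
    rw [hmgf, hindep.mgf_sum hwm (Finset.Icc 1 N)]
    calc ∏ n ∈ Finset.Icc 1 N, mgf (w n) P t
        ≤ ∏ n ∈ Finset.Icc 1 N, Real.exp (t ^ 2 * (4 * V n)) := by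
          apply Finset.prod_le_prod (fun n _ => mgf_nonneg)
          intro n _
          exact mgf_single (P := P) (v := 4 * V n) (hwm n) (hwi n) (hwi2 n)
            (hw0 n) (hbnd n) (hwsq n)
      _ = Real.exp (∑ n ∈ Finset.Icc 1 N, t ^ 2 * (4 * V n)) := (Real.exp_sum _ _).symm
      _ ≤ Real.exp (4 * L) := by
          apply Real.exp_le_exp.2
          have heq2 : ∑ n ∈ Finset.Icc 1 N, t ^ 2 * (4 * V n) = 4 * (l ^ 2 * S) := by
            calc ∑ n ∈ Finset.Icc 1 N, t ^ 2 * (4 * V n)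
                = ∑ n ∈ Finset.Icc 1 N, 4 * (l ^ 2 * V n) :=
                  Finset.sum_congr rfl fun n _ => by rw [ht2]; ring
              _ = 4 * (l ^ 2 * S) := by rw [hSdef, Finset.mul_sum, Finset.mul_sum]
          rw [heq2, hl2]
  -- integral of U
  have hWb : ∀ j ω, ‖W j ω‖ ≤ 2 * T * N := by
    intro j ω
    rw [hWdef]
    dsimp only
    calc ‖∑ n ∈ Finset.Icc 1 N, Y n ω * eK n ((j:ℝ)/M)‖
        ≤ ∑ n ∈ Finset.Icc 1 N, ‖Y n ω * eK n ((j:ℝ)/M)‖ := norm_sum_le _ _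
      _ ≤ ∑ _n ∈ Finset.Icc 1 N, 2 * T := by
          apply Finset.sum_le_sum
          intro n _
          rw [norm_mul, norm_eK, mul_one]
          exact hYb n ω
      _ = 2 * T * N := by
          rw [Finset.sum_const, Nat.card_Icc, nsmul_eq_mul]
          push_cast
          ring
  have hExpInt : ∀ (φ : ℂ →L[ℝ] ℝ), (∀ z, |φ z| ≤ ‖z‖) → ∀ (j : ℕ) (t : ℝ), |t| ≤ l →
      Integrable (fun ω => Real.exp (t * φ (W j ω))) P := by
    intro φ hφ j t htl
    refine Integrable.mono' (integrable_const (Real.exp (l * (2 * T * N))))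
      ((Real.measurable_exp.comp ((φ.measurable.comp (hWm j)).const_mul t)).aestronglyMeasurable)
      (Filter.Eventually.of_forall fun ω => ?_)
    simp only [Function.comp_apply, Real.norm_eq_abs, Real.abs_exp]
    apply Real.exp_le_exp.2
    calc t * φ (W j ω) ≤ |t * φ (W j ω)| := le_abs_self _
      _ = |t| * |φ (W j ω)| := abs_mul _ _
      _ ≤ l * (2 * T * N) := by
          apply mul_le_mul htl ((hφ _).trans (hWb j ω)) (abs_nonneg _) hl.le
  have hIntU : ∀ (φ : ℂ →L[ℝ] ℝ), (∀ z, |φ z| ≤ ‖z‖) →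
      Integrable (U φ) P ∧ ∫ ω, U φ ω ∂P ≤ 2 * (M+1) * Real.exp (4 * L) := by
    intro φ hφ
    have hterm : ∀ j, Integrable (fun ω => Real.exp (l * φ (W j ω))
        + Real.exp (-(l * φ (W j ω)))) P := by
      intro j
      have h1 := hExpInt φ hφ j l (by rw [abs_of_pos hl])
      have h2 := hExpInt φ hφ j (-l) (by rw [abs_neg, abs_of_pos hl])
      apply h1.add (h2.congr ?_)
      filter_upwards with ω
      rw [neg_mul]
    have hUint : Integrable (U φ) P := by
      rw [hUdef]
      exact integrable_finset_sum _ fun j _ => hterm j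
    refine ⟨hUint, ?_⟩
    have hsplit : ∫ ω, U φ ω ∂P = ∑ j ∈ Finset.range (M+1),
        ((∫ ω, Real.exp (l * φ (W j ω)) ∂P) + ∫ ω, Real.exp (-(l * φ (W j ω))) ∂P) := by
      rw [hUdef]
      dsimp only
      rw [integral_finset_sum _ fun j _ => hterm j]
      refine Finset.sum_congr rfl fun j _ => ?_
      have h1 := hExpInt φ hφ j l (by rw [abs_of_pos hl])
      have h2' : Integrable (fun ω => Real.exp (-(l * φ (W j ω)))) P := by
        apply (hExpInt φ hφ j (-l) (by rw [abs_neg, abs_of_pos hl])).congr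
        filter_upwards with ω
        rw [neg_mul]
      rw [integral_add h1 h2']
    rw [hsplit]
    have hbound : ∀ j ∈ Finset.range (M+1),
        (∫ ω, Real.exp (l * φ (W j ω)) ∂P) + (∫ ω, Real.exp (-(l * φ (W j ω))) ∂P)
          ≤ 2 * Real.exp (4 * L) := by
      intro j _
      have h1 := hmgfb φ hφ j l rfl (le_of_eq (abs_of_pos hl))
      have h2 := hmgfb φ hφ j (-l) (by ring) (by rw [abs_neg, abs_of_pos hl])
      have h2' : (∫ ω, Real.exp (-(l * φ (W j ω))) ∂P) ≤ Real.exp (4 * L) := by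
        refine le_trans (le_of_eq ?_) h2
        congr 1
        funext ω
        rw [neg_mul]
      linarith
    calc ∑ j ∈ Finset.range (M+1),
        ((∫ ω, Real.exp (l * φ (W j ω)) ∂P) + ∫ ω, Real.exp (-(l * φ (W j ω))) ∂P)
        ≤ ∑ _j ∈ Finset.range (M+1), 2 * Real.exp (4 * L) := Finset.sum_le_sum hbound
      _ = 2 * (M+1) * Real.exp (4 * L) := by
          rw [Finset.sum_const, Finset.card_range, nsmul_eq_mul]
          push_cast
          ring
  have hlogU : ∀ (φ : ℂ →L[ℝ] ℝ), (∀ z, |φ z| ≤ ‖z‖) →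
      Integrable (fun ω => Real.log (U φ ω)) P ∧
        ∫ ω, Real.log (U φ ω) ∂P ≤ 10 * L := by
    intro φ hφ
    obtain ⟨hUint, hUle⟩ := hIntU φ hφ
    have hlogint : Integrable (fun ω => Real.log (U φ ω)) P := by
      refine Integrable.mono' hUint ((hUm φ).log.aestronglyMeasurable)
        (Filter.Eventually.of_forall fun ω => ?_)
      rw [Real.norm_eq_abs, abs_of_nonneg (Real.log_nonneg (hU1 φ ω))]
      have := Real.log_le_sub_one_of_pos (lt_of_lt_of_le one_pos (hU1 φ ω))
      linarith
    refine ⟨hlogint, ?_⟩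
    have hjen := jensen_log (hUm φ) hUint (hU1 φ)
    have hUpos : (0:ℝ) < ∫ ω, U φ ω ∂P := by
      have : (1:ℝ) = ∫ (_ : Ω), (1:ℝ) ∂P := by simp
      have h1 : (1:ℝ) ≤ ∫ ω, U φ ω ∂P := by
        rw [this]
        exact integral_mono (integrable_const 1) hUint (hU1 φ)
      linarith
    have hloglog : Real.log (∫ ω, U φ ω ∂P) ≤ Real.log (2 * (M+1) * Real.exp (4 * L)) :=
      Real.log_le_log hUpos hUle
    have hM6 : (2:ℝ) * (M+1) ≤ (N:ℝ) ^ 6 := by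
      rw [hMr]
      have h2 : (4:ℝ) ≤ (N:ℝ) ^ 2 := by nlinarith [hNr]
      have key : ∀ a : ℝ, 4 ≤ a → 14 * a + 2 ≤ a ^ 3 := by
        intro a ha
        nlinarith [sq_nonneg (a - 4), mul_nonneg (sub_nonneg.2 ha) (sq_nonneg (a - 4)), ha]
      have := key ((N:ℝ) ^ 2) h2
      nlinarith [this]
    have hlogM : Real.log (2 * (M+1) * Real.exp (4 * L)) ≤ 6 * L + 4 * L := by
      rw [Real.log_mul (by positivity) (Real.exp_ne_zero _), Real.log_exp]
      have h6 : Real.log (2 * ((M:ℝ)+1)) ≤ 6 * L := by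
        calc Real.log (2 * ((M:ℝ)+1)) ≤ Real.log ((N:ℝ) ^ 6) :=
            Real.log_le_log (by positivity) hM6
          _ = 6 * Real.log N := by rw [Real.log_pow]; push_cast; ring
          _ = 6 * L := by rw [hLdef]
      linarith
    calc ∫ ω, Real.log (U φ ω) ∂P ≤ Real.log (∫ ω, U φ ω ∂P) := hjen
      _ ≤ 6 * L + 4 * L := le_trans hloglog hlogM
      _ = 10 * L := by ring
  -- pointwise extraction
  have hkey1 : ∀ (φ : ℂ →L[ℝ] ℝ) (ω : Ω) (j : ℕ), j ∈ Finset.range (M+1) →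
      |φ (W j ω)| ≤ l⁻¹ * Real.log (U φ ω) := by
    intro φ ω j hj
    have hterm : Real.exp (l * |φ (W j ω)|) ≤ U φ ω := by
      have h1 : Real.exp (l * |φ (W j ω)|) ≤
          Real.exp (l * φ (W j ω)) + Real.exp (-(l * φ (W j ω))) := by
        rcases abs_cases (φ (W j ω)) with ⟨h, _⟩ | ⟨h, _⟩
        · rw [h]
          have : 0 < Real.exp (-(l * φ (W j ω))) := Real.exp_pos _
          linarith
        · rw [h, mul_neg, ← neg_mul]
          have : 0 < Real.exp (l * φ (W j ω)) := Real.exp_pos _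
          linarith [le_refl (Real.exp (-(l * φ (W j ω))))]
      calc Real.exp (l * |φ (W j ω)|) ≤ _ := h1
        _ ≤ U φ ω := Finset.single_le_sum (f := fun j =>
            Real.exp (l * φ (W j ω)) + Real.exp (-(l * φ (W j ω))))
            (fun i _ => by positivity) hj
    have hlog : l * |φ (W j ω)| ≤ Real.log (U φ ω) := by
      have := Real.log_le_log (Real.exp_pos _) hterm
      rwa [Real.log_exp] at this
    calc |φ (W j ω)| = l⁻¹ * (l * |φ (W j ω)|) := by
          field_simp
      _ ≤ l⁻¹ * Real.log (U φ ω) :=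
          mul_le_mul_of_nonneg_left hlog (inv_nonneg.2 hl.le)
  have hre : ∀ z : ℂ, |Complex.reCLM z| ≤ ‖z‖ := fun z => by
    simpa using Complex.abs_re_le_norm z
  have him : ∀ z : ℂ, |Complex.imCLM z| ≤ ‖z‖ := fun z => by
    simpa using Complex.abs_im_le_norm z
  -- the dominating function
  set G : Ω → ℝ := fun ω => l⁻¹ * (Real.log (U Complex.reCLM ω) + Real.log (U Complex.imCLM ω))
    + (4*Real.pi*N/M) * (∑ n ∈ Finset.Icc 1 N, ‖Y n ω‖)
    + ∑ n ∈ Finset.Icc 1 N, ‖R n ω‖ with hGdef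
  have hGnn : ∀ ω, 0 ≤ G ω := by
    intro ω
    have h1 : 0 ≤ Real.log (U Complex.reCLM ω) := Real.log_nonneg (hU1 _ ω)
    have h2 : 0 ≤ Real.log (U Complex.imCLM ω) := Real.log_nonneg (hU1 _ ω)
    have h3 : (0:ℝ) ≤ ∑ n ∈ Finset.Icc 1 N, ‖Y n ω‖ :=
      Finset.sum_nonneg fun n _ => norm_nonneg _
    have h4 : (0:ℝ) ≤ ∑ n ∈ Finset.Icc 1 N, ‖R n ω‖ :=
      Finset.sum_nonneg fun n _ => norm_nonneg _
    have h5 : (0:ℝ) ≤ 4*Real.pi*N/M := by positivity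
    have h6 : (0:ℝ) ≤ l⁻¹ := inv_nonneg.2 hl.le
    have := mul_nonneg h5 h3
    have := mul_nonneg h6 (add_nonneg h1 h2)
    rw [hGdef]
    dsimp only
    linarith
  -- pointwise domination
  have hfG : ∀ ω, (⨆ x : ℝ, ‖∑ n ∈ Finset.Icc 1 N,
      X n ω * Complex.exp (2 * Real.pi * Complex.I * (n * x))‖) ≤ G ω := by
    intro ω
    apply Real.iSup_le _ (hGnn ω)
    intro x
    set y := Int.fract x with hydef
    have hy0 : 0 ≤ y := Int.fract_nonneg x
    have hy1 : y < 1 := Int.fract_lt_one x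
    set j : ℕ := ⌊y * M⌋₊ with hjdef
    have hM0 : (0:ℝ) < M := by exact_mod_cast hM
    have hjle : (j:ℝ) ≤ y * M := Nat.floor_le (by positivity)
    have hjlt : y * M < (j:ℝ) + 1 := Nat.lt_floor_add_one _
    have hjM : j ∈ Finset.range (M+1) := by
      rw [Finset.mem_range]
      have h1 : (j:ℝ) < M := by
        calc (j:ℝ) ≤ y * M := hjle
          _ < 1 * M := mul_lt_mul_of_pos_right hy1 hM0
          _ = M := one_mul _
      have : j < M := by exact_mod_cast h1
      omega
    have hdist : |y - (j:ℝ)/M| ≤ 1/M := by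
      have hd0 : 0 ≤ y - (j:ℝ)/M := by
        rw [sub_nonneg, div_le_iff₀ hM0]
        linarith
      have hd1 : y - (j:ℝ)/M ≤ 1/M := by
        have hya : y ≤ ((j:ℝ) + 1)/M := by
          rw [le_div_iff₀ hM0]
          linarith
        have heq : ((j:ℝ) + 1)/M - (j:ℝ)/M = 1/M := by field_simp; ring
        linarith
      rw [abs_of_nonneg hd0]
      exact hd1
    calc ‖∑ n ∈ Finset.Icc 1 N, X n ω * Complex.exp (2 * Real.pi * Complex.I * (n * x))‖
        = ‖∑ n ∈ Finset.Icc 1 N, X n ω * eK n x‖ := rfl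
      _ ≤ ‖∑ n ∈ Finset.Icc 1 N, Y n ω * eK n x‖ + ∑ n ∈ Finset.Icc 1 N, ‖R n ω‖ := by
          have hXYR : ∑ n ∈ Finset.Icc 1 N, X n ω * eK n x
              = (∑ n ∈ Finset.Icc 1 N, Y n ω * eK n x)
                + ∑ n ∈ Finset.Icc 1 N, R n ω * eK n x := by
            rw [← Finset.sum_add_distrib]
            refine Finset.sum_congr rfl fun n _ => ?_
            rw [hRdef]
            dsimp only
            ring
          rw [hXYR]
          refine (norm_add_le _ _).trans (add_le_add_right ?_ _)
          refine (norm_sum_le _ _).trans ?_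
          apply Finset.sum_le_sum
          intro n _
          rw [norm_mul, norm_eK, mul_one]
      _ ≤ (‖W j ω‖ + (4*Real.pi*N/M) * ∑ n ∈ Finset.Icc 1 N, ‖Y n ω‖)
            + ∑ n ∈ Finset.Icc 1 N, ‖R n ω‖ := by
          apply add_le_add_left
          have hper : ∑ n ∈ Finset.Icc 1 N, Y n ω * eK n x
              = ∑ n ∈ Finset.Icc 1 N, Y n ω * eK n y :=
            Finset.sum_congr rfl fun n _ => by rw [eK_fract n x]
          rw [hper]
          have hsplit : ∑ n ∈ Finset.Icc 1 N, Y n ω * eK n y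
              = W j ω + ∑ n ∈ Finset.Icc 1 N, Y n ω * (eK n y - eK n ((j:ℝ)/M)) := by
            rw [hWdef]
            dsimp only
            rw [← Finset.sum_add_distrib]
            refine Finset.sum_congr rfl fun n _ => ?_
            ring
          rw [hsplit]
          refine (norm_add_le _ _).trans (add_le_add_right ?_ _)
          refine (norm_sum_le _ _).trans ?_
          rw [Finset.mul_sum]
          apply Finset.sum_le_sum
          intro n hn
          have hnN : (n:ℝ) ≤ N := by exact_mod_cast (Finset.mem_Icc.1 hn).2
          rw [norm_mul]
          have hNM1 : 2 * Real.pi * (N:ℝ) * (1/M) ≤ 1 := by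
            have e1 : 2 * Real.pi * (N:ℝ) * (1/(M:ℝ)) = 2 * Real.pi/(7*(N:ℝ)) := by
              rw [hMr]
              field_simp
            rw [e1, div_le_one (by positivity)]
            nlinarith [Real.pi_le_four, hNr]
          have hpip := Real.pi_pos
          have hcond : 2 * Real.pi * n * |y - (j:ℝ)/M| ≤ 1 := by
            have hstep : 2 * Real.pi * n * |y - (j:ℝ)/M| ≤ 2 * Real.pi * (N:ℝ) * (1/M) :=
              mul_le_mul (by nlinarith [hnN]) hdist (abs_nonneg _) (by positivity)
            linarith [hNM1, hstep]
          have hstep2 : 4*Real.pi*(n:ℝ)*|y - (j:ℝ)/M| ≤ 4*Real.pi*(N:ℝ)*(1/M) :=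
            mul_le_mul (by nlinarith [hnN]) hdist (abs_nonneg _) (by positivity)
          have hek : ‖eK n y - eK n ((j:ℝ)/M)‖ ≤ 4*Real.pi*N/M :=
            (eK_diff hcond).trans (hstep2.trans (le_of_eq (by ring)))
          calc ‖Y n ω‖ * ‖eK n y - eK n ((j:ℝ)/M)‖ ≤ ‖Y n ω‖ * (4*Real.pi*N/M) :=
              mul_le_mul_of_nonneg_left hek (norm_nonneg _)
            _ = 4*Real.pi*N/M * ‖Y n ω‖ := by ring
      _ ≤ G ω := by
          have hre1 := hkey1 Complex.reCLM ω j hjM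
          have him1 := hkey1 Complex.imCLM ω j hjM
          simp only [Complex.reCLM_apply, Complex.imCLM_apply] at hre1 him1
          have h5 : ‖W j ω‖ ≤ l⁻¹ * (Real.log (U Complex.reCLM ω)
              + Real.log (U Complex.imCLM ω)) := by
            calc ‖W j ω‖ ≤ |(W j ω).re| + |(W j ω).im| := by
                  exact Complex.norm_le_abs_re_add_abs_im _
              _ ≤ l⁻¹ * Real.log (U Complex.reCLM ω) + l⁻¹ * Real.log (U Complex.imCLM ω) :=
                  add_le_add hre1 him1
              _ = l⁻¹ * (Real.log (U Complex.reCLM ω) + Real.log (U Complex.imCLM ω)) := by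
                  ring
          rw [hGdef]
          dsimp only
          linarith
  -- integrability of G and conclusion
  obtain ⟨hIntLogR, hLogRle⟩ := hlogU Complex.reCLM hre
  obtain ⟨hIntLogI, hLogIle⟩ := hlogU Complex.imCLM him
  have hIntSumY : Integrable (fun ω => ∑ n ∈ Finset.Icc 1 N, ‖Y n ω‖) P :=
    integrable_finset_sum _ fun n _ => hIntnY n
  have hIntSumR : Integrable (fun ω => ∑ n ∈ Finset.Icc 1 N, ‖R n ω‖) P :=
    integrable_finset_sum _ fun n _ => hIntnR n
  have hIntG : Integrable G P := by
    rw [hGdef]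
    exact (((hIntLogR.add hIntLogI).const_mul l⁻¹).add
      (hIntSumY.const_mul (4*Real.pi*N/M))).add hIntSumR
  have hmono : (∫ ω, (⨆ x : ℝ, ‖∑ n ∈ Finset.Icc 1 N,
      X n ω * Complex.exp (2 * Real.pi * Complex.I * (n * x))‖) ∂P) ≤ ∫ ω, G ω ∂P := by
    apply integral_mono_of_nonneg
    · exact Filter.Eventually.of_forall fun ω => Real.iSup_nonneg fun x => norm_nonneg _
    · exact hIntG
    · exact Filter.Eventually.of_forall hfG
  have hGsplit : ∫ ω, G ω ∂P = l⁻¹ * ((∫ ω, Real.log (U Complex.reCLM ω) ∂P)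
      + ∫ ω, Real.log (U Complex.imCLM ω) ∂P)
      + (4*Real.pi*N/M) * (∑ n ∈ Finset.Icc 1 N, ∫ ω, ‖Y n ω‖ ∂P)
      + ∑ n ∈ Finset.Icc 1 N, ∫ ω, ‖R n ω‖ ∂P := by
    have hiA : Integrable (fun ω => l⁻¹ * (Real.log (U Complex.reCLM ω)
        + Real.log (U Complex.imCLM ω))) P :=
      (hIntLogR.add hIntLogI).const_mul l⁻¹
    have hiB : Integrable (fun ω => (4*Real.pi*N/M) * ∑ n ∈ Finset.Icc 1 N, ‖Y n ω‖) P :=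
      hIntSumY.const_mul _
    have hiAB : Integrable (fun ω => l⁻¹ * (Real.log (U Complex.reCLM ω)
        + Real.log (U Complex.imCLM ω))
        + (4*Real.pi*N/M) * ∑ n ∈ Finset.Icc 1 N, ‖Y n ω‖) P := hiA.add hiB
    rw [hGdef]
    rw [integral_add hiAB hIntSumR, integral_add hiA hiB, integral_const_mul, integral_const_mul,
      integral_add hIntLogR hIntLogI, integral_finset_sum _ fun n _ => hIntnY n,
      integral_finset_sum _ fun n _ => hIntnR n]
  -- numeric bounds
  have hYint : ∀ n, ∫ ω, ‖Y n ω‖ ∂P ≤ 2 * Real.sqrt (V n) := by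
    intro n
    have hpt : ∀ ω, ‖Y n ω‖ ≤ ‖tr (X n ω)‖ + ‖c n‖ := fun ω => norm_sub_le _ _
    calc ∫ ω, ‖Y n ω‖ ∂P ≤ ∫ ω, (‖tr (X n ω)‖ + ‖c n‖) ∂P :=
        integral_mono (hIntnY n) ((hIntTr n).norm.add (integrable_const _)) hpt
      _ = (∫ ω, ‖tr (X n ω)‖ ∂P) + ‖c n‖ := by
          rw [integral_add (hIntTr n).norm (integrable_const _), integral_const]
          simp
      _ ≤ Real.sqrt (V n) + Real.sqrt (V n) := by
          have h1 : ∫ ω, ‖tr (X n ω)‖ ∂P ≤ ∫ ω, ‖X n ω‖ ∂P :=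
            integral_mono (hIntTr n).norm (hIntnX n) fun ω => htrle _
          have h2 := hXle n
          have h3 := hcV n
          exact add_le_add (h1.trans h2) h3
      _ = 2 * Real.sqrt (V n) := by ring
  have hsumY : (∑ n ∈ Finset.Icc 1 N, ∫ ω, ‖Y n ω‖ ∂P)
      ≤ 2 * (Real.sqrt N * Real.sqrt S) := by
    have hCS : (∑ n ∈ Finset.Icc 1 N, Real.sqrt (V n)) ≤ Real.sqrt N * Real.sqrt S := by
      have h1 : (∑ n ∈ Finset.Icc 1 N, Real.sqrt (V n)) ^ 2 ≤ (N:ℝ) * S := by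
        have := Finset.sum_mul_sq_le_sq_mul_sq (Finset.Icc 1 N)
          (fun _ => (1:ℝ)) (fun n => Real.sqrt (V n))
        simp only [one_mul, one_pow] at this
        calc (∑ n ∈ Finset.Icc 1 N, Real.sqrt (V n)) ^ 2
            ≤ (∑ _n ∈ Finset.Icc 1 N, (1:ℝ)) * ∑ n ∈ Finset.Icc 1 N, Real.sqrt (V n) ^ 2 :=
              this
          _ = (N:ℝ) * S := by
              rw [Finset.sum_const, Nat.card_Icc, nsmul_eq_mul, hSdef]
              congr 1
              · push_cast; ring
              · exact Finset.sum_congr rfl fun n _ => Real.sq_sqrt (hV0 n)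
      have h0 : 0 ≤ ∑ n ∈ Finset.Icc 1 N, Real.sqrt (V n) :=
        Finset.sum_nonneg fun n _ => Real.sqrt_nonneg _
      rw [← Real.sqrt_mul_self h0]
      rw [← Real.sqrt_mul (by positivity)]
      exact Real.sqrt_le_sqrt (by nlinarith [h1])
    calc (∑ n ∈ Finset.Icc 1 N, ∫ ω, ‖Y n ω‖ ∂P)
        ≤ ∑ n ∈ Finset.Icc 1 N, 2 * Real.sqrt (V n) :=
          Finset.sum_le_sum fun n _ => hYint n
      _ = 2 * ∑ n ∈ Finset.Icc 1 N, Real.sqrt (V n) := by rw [Finset.mul_sum]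
      _ ≤ 2 * (Real.sqrt N * Real.sqrt S) := by linarith [hCS]
  have hsumR : (∑ n ∈ Finset.Icc 1 N, ∫ ω, ‖R n ω‖ ∂P) ≤ 4 * (Real.sqrt L * Real.sqrt S) := by
    have hlS : l * S = Real.sqrt L * Real.sqrt S := by
      rw [hldef, div_mul_eq_mul_div, mul_div_assoc, Real.div_sqrt]
    calc (∑ n ∈ Finset.Icc 1 N, ∫ ω, ‖R n ω‖ ∂P)
        ≤ ∑ n ∈ Finset.Icc 1 N, 4 * l * V n := Finset.sum_le_sum fun n _ => hRle n
      _ = 4 * (l * S) := by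
          rw [hSdef, Finset.mul_sum, Finset.mul_sum]
          exact Finset.sum_congr rfl fun n _ => by ring
      _ = 4 * (Real.sqrt L * Real.sqrt S) := by rw [hlS]
  -- final arithmetic
  have hinv : l⁻¹ = Real.sqrt S / Real.sqrt L := by
    rw [hldef, inv_div]
  have hinvL : l⁻¹ * (10 * L + 10 * L) = 20 * (Real.sqrt S * Real.sqrt L) := by
    rw [hinv, div_mul_eq_mul_div, div_eq_iff (ne_of_gt hsL)]
    linear_combination ((-20) * Real.sqrt S) * (Real.mul_self_sqrt hL.le)
  have hsqL : (1:ℝ)/2 ≤ Real.sqrt L := by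
    have h1 : (0.6931471803:ℝ) < Real.log 2 := Real.log_two_gt_d9
    have h2 : Real.log 2 ≤ L := by
      rw [hLdef]
      exact Real.log_le_log (by norm_num) hNr
    rw [show (1:ℝ)/2 = Real.sqrt (1/4) by
      rw [show (1:ℝ)/4 = (1/2)^2 by norm_num, Real.sqrt_sq (by norm_num)]]
    exact Real.sqrt_le_sqrt (by linarith)
  have hsqNN : Real.sqrt N ≤ (N:ℝ) := by
    have h1 : Real.sqrt (N:ℝ) ≤ Real.sqrt ((N:ℝ)^2) := Real.sqrt_le_sqrt (by nlinarith [hNr])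
    rwa [Real.sqrt_sq (by positivity)] at h1
  have hmid : (4*Real.pi*N/M) * (2 * (Real.sqrt N * Real.sqrt S))
      ≤ 10 * (Real.sqrt S * Real.sqrt L) := by
    have hMe : (4*Real.pi*(N:ℝ)/M) = 4*Real.pi/(7*(N:ℝ)) := by
      rw [hMr]
      field_simp
    rw [hMe]
    have h1 : 4*Real.pi/(7*(N:ℝ)) * (2 * (Real.sqrt N * Real.sqrt S)) ≤ 5 * Real.sqrt S := by
      rw [div_mul_eq_mul_div, div_le_iff₀ (by positivity)]
      have hkey : (8*Real.pi*Real.sqrt S) * Real.sqrt N ≤ (8*Real.pi*Real.sqrt S) * N :=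
        mul_le_mul_of_nonneg_left hsqNN (by positivity)
      have hNS : (0:ℝ) ≤ (N:ℝ) * Real.sqrt S := by positivity
      nlinarith [Real.pi_le_four, Real.pi_pos, hsS.le, hNr, hkey, hNS]
    have h2 : 5 * Real.sqrt S ≤ 10 * (Real.sqrt S * Real.sqrt L) := by
      have h3 : (0:ℝ) ≤ Real.sqrt S * (2 * Real.sqrt L - 1) :=
        mul_nonneg hsS.le (by linarith [hsqL])
      nlinarith [h3]
    linarith
  calc (∫ ω, (⨆ x : ℝ, ‖∑ n ∈ Finset.Icc 1 N,
      X n ω * Complex.exp (2 * Real.pi * Complex.I * (n * x))‖) ∂P)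
      ≤ ∫ ω, G ω ∂P := hmono
    _ = l⁻¹ * ((∫ ω, Real.log (U Complex.reCLM ω) ∂P)
        + ∫ ω, Real.log (U Complex.imCLM ω) ∂P)
        + (4*Real.pi*N/M) * (∑ n ∈ Finset.Icc 1 N, ∫ ω, ‖Y n ω‖ ∂P)
        + ∑ n ∈ Finset.Icc 1 N, ∫ ω, ‖R n ω‖ ∂P := hGsplit
    _ ≤ l⁻¹ * (10 * L + 10 * L) + (4*Real.pi*N/M) * (2 * (Real.sqrt N * Real.sqrt S))
        + 4 * (Real.sqrt L * Real.sqrt S) := by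
        have hi : 0 ≤ l⁻¹ := inv_nonneg.2 hl.le
        have hc : (0:ℝ) ≤ 4*Real.pi*N/M := by positivity
        have := add_le_add (add_le_add
          (mul_le_mul_of_nonneg_left (add_le_add hLogRle hLogIle) hi)
          (mul_le_mul_of_nonneg_left hsumY hc)) hsumR
        linarith
    _ ≤ 20 * (Real.sqrt S * Real.sqrt L) + 10 * (Real.sqrt S * Real.sqrt L)
        + 4 * (Real.sqrt L * Real.sqrt S) := by
        rw [hinvL]
        linarith [hmid]
    _ ≤ 100 * Real.sqrt S * Real.sqrt L := by nlinarith [mul_nonneg hsS.le hsL.le]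


/-- **Salem–Zygmund for centered independent coefficients.**
There is an absolute constant `C` such that for every finite sequence
`(X_n)_{1≤n≤N}` of centered, square-integrable, complex, independent random
variables, the random polynomial `P_N(x) = ∑_{n=1}^N X_n e(nx)` satisfies
`𝔼 ‖P_N‖_∞ ≤ C (∑ V(X_n))^{1/2} √(log N)` where `V(X_n) = 𝔼|X_n|²`. -/
theorem salem_zygmund_independent :
    ∃ C : ℝ, 0 < C ∧
      ∀ (Ω : Type) (_ : MeasurableSpace Ω) (P : Measure Ω),
        IsProbabilityMeasure P →
        ∀ X : ℕ → Ω → ℂ, (∀ n, Measurable (X n)) →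
          iIndepFun X P →
          (∀ n, MemLp (X n) 2 P) →
          (∀ n, ∫ ω, X n ω ∂P = 0) →
          ∀ N : ℕ, 2 ≤ N →
            (∫ ω, (⨆ x : ℝ, ‖∑ n ∈ Finset.Icc 1 N,
                X n ω * Complex.exp (2 * Real.pi * Complex.I * (n * x))‖) ∂P)
              ≤ C * Real.sqrt (∑ n ∈ Finset.Icc 1 N, ∫ ω, ‖X n ω‖ ^ 2 ∂P) *
                  Real.sqrt (Real.log N) := by
  refine ⟨100, by norm_num, ?_⟩
  intro Ω mΩ P hP X hXm hXi hX2 hX0 N hN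
  haveI : IsProbabilityMeasure P := hP
  have hS0 : 0 ≤ ∑ n ∈ Finset.Icc 1 N, ∫ ω, ‖X n ω‖ ^ 2 ∂P :=
    Finset.sum_nonneg fun n _ => integral_nonneg fun ω => sq_nonneg _
  rcases eq_or_lt_of_le hS0 with hSz | hS
  · -- degenerate case
    have hIntX2 : ∀ n, Integrable (fun ω => ‖X n ω‖ ^ 2) P := by
      intro n
      have := (hX2 n).integrable_norm_rpow (p := 2) (by norm_num) (by norm_num)
      apply this.congr
      filter_upwards with ω
      norm_num
    have hall : ∀ n ∈ Finset.Icc 1 N, (∫ ω, ‖X n ω‖ ^ 2 ∂P) = 0 :=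
      (Finset.sum_eq_zero_iff_of_nonneg
        (fun n _ => integral_nonneg fun ω => sq_nonneg _)).1 hSz.symm
    have hae : ∀ᵐ ω ∂P, ∀ n ∈ Finset.Icc 1 N, X n ω = 0 := by
      rw [ae_all_iff]
      intro n
      rcases Decidable.em (n ∈ Finset.Icc 1 N) with hn | hn
      swap
      · filter_upwards with ω hn'; exact absurd hn' hn
      have h0 : (fun ω => ‖X n ω‖ ^ 2) =ᵐ[P] 0 :=
        (integral_eq_zero_iff_of_nonneg (fun ω => sq_nonneg _) (hIntX2 n)).1 (hall n hn)
      filter_upwards [h0] with ω hω _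
      have h1 : ‖X n ω‖ ^ 2 = 0 := hω
      have h2 := pow_eq_zero_iff (n := 2) (by norm_num) |>.1 h1
      exact norm_eq_zero.1 h2
    have hzero : (fun ω => (⨆ x : ℝ, ‖∑ n ∈ Finset.Icc 1 N,
        X n ω * Complex.exp (2 * Real.pi * Complex.I * (n * x))‖)) =ᵐ[P] 0 := by
      filter_upwards [hae] with ω hω
      have hz : ∀ x : ℝ, ‖∑ n ∈ Finset.Icc 1 N,
          X n ω * Complex.exp (2 * Real.pi * Complex.I * (n * x))‖ = 0 := by
        intro x
        rw [Finset.sum_congr rfl fun n hn => by rw [hω n hn, zero_mul]]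
        simp
      simp only [hz, Pi.zero_apply]
      exact ciSup_const
    rw [integral_congr_ae hzero]
    simp only [Pi.zero_apply, integral_zero]
    positivity
  · exact @sz_main Ω mΩ P hP X hXm hXi hX2 hX0 N hN hS
end

section
/- Let (δ_k)_{k≥1} be a non-increasing sequence with 0 < δ_k < 1 and ∑_k δ_k = ∞, and let (ξ_k)_{k≥1} be independent random variables with P(ξ_k = 1) = δ_k, P(ξ_k = 0) = 1 − δ_k. Let R = {k ≥ 1 : ξ_k = 1} = {u_1 < u_2 < ⋯} (almost surely infinite). Then: (1) almost surely, limsup_{n→∞} (u_{n+1} − u_n) = ∞; and (2) if moreover ∑_k δ_k² < ∞, then almost surely u_{n+1} − u_n → ∞ as n → ∞. -/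
open Real Filter MeasureTheory ProbabilityTheory

section auxiliary
open Set

open Filter Set

lemma gap_aux1 (p : ℕ → Prop) (hinf : (setOf p).Infinite) (M N : ℕ)
    (a : ℕ) (ha : Nat.nth p N < a) (hblock : ∀ i, a ≤ i → i < a + (M + 1) → ¬ p i) :
    ∃ n, N ≤ n ∧ M ≤ Nat.nth p (n + 1) - Nat.nth p n := by
  haveI := Classical.decPred p
  set c := Nat.count p a with hc
  have hNc : N < c := (Nat.lt_nth_iff_count_lt hinf).mpr ha
  refine ⟨c - 1, by omega, ?_⟩
  have h1 : Nat.nth p (c - 1) < a := Nat.nth_lt_of_lt_count (by omega)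
  have h2 : a ≤ Nat.nth p c := (Nat.count_le_iff_le_nth hinf).mp le_rfl
  have h3 : p (Nat.nth p c) := Nat.nth_mem_of_infinite hinf c
  have h4 : a + (M + 1) ≤ Nat.nth p c := by
    by_contra h
    exact hblock _ h2 (by omega) h3
  have : c - 1 + 1 = c := by omega
  rw [this]
  omega

lemma gap_aux2 (p : ℕ → Prop) (hinf : (setOf p).Infinite)
    (hF : ∀ M : ℕ, ∃ K : ℕ, ∀ k, K ≤ k → ¬ (p k ∧ ∃ j, 1 ≤ j ∧ j ≤ M ∧ p (k + j))) :
    Tendsto (fun n : ℕ => Nat.nth p (n + 1) - Nat.nth p n) atTop atTop := by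
  rw [tendsto_atTop_atTop]
  intro M
  obtain ⟨K, hK⟩ := hF M
  refine ⟨K, fun n hn => ?_⟩
  have hk : K ≤ Nat.nth p n := le_trans hn (Nat.le_nth fun hf => absurd hf hinf)
  have hpk : p (Nat.nth p n) := Nat.nth_mem_of_infinite hinf n
  have hpk1 : p (Nat.nth p (n + 1)) := Nat.nth_mem_of_infinite hinf (n + 1)
  have hlt : Nat.nth p n < Nat.nth p (n + 1) := (Nat.nth_lt_nth hinf).mpr (by omega)
  by_contra h
  push_neg at h
  refine hK _ hk ⟨hpk, Nat.nth p (n + 1) - Nat.nth p n, by omega, by omega, ?_⟩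
  have : Nat.nth p n + (Nat.nth p (n + 1) - Nat.nth p n) = Nat.nth p (n + 1) := by omega
  rw [this]; exact hpk1


variable {Ω : Type*} [MeasurableSpace Ω] (P : Measure Ω) [IsProbabilityMeasure P]
    (δ : ℕ → ℝ) (ξ : ℕ → Ω → ℕ)


variable {Ω : Type*} [MeasurableSpace Ω] (P : Measure Ω) [IsProbabilityMeasure P]
    (δ : ℕ → ℝ) (ξ : ℕ → Ω → ℕ)

lemma law1 (hlaw : ∀ k, P {ω | ξ k ω = 1} = ENNReal.ofReal (δ k)) (k : ℕ) :
    P (ξ k ⁻¹' {1}) = ENNReal.ofReal (δ k) := hlaw k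

lemma law0 (hmeas : ∀ k, Measurable (ξ k)) (hval : ∀ k ω, ξ k ω = 0 ∨ ξ k ω = 1)
    (hlaw : ∀ k, P {ω | ξ k ω = 1} = ENNReal.ofReal (δ k)) (k : ℕ) :
    P (ξ k ⁻¹' {0}) = 1 - ENNReal.ofReal (δ k) := by
  have h : ξ k ⁻¹' {0} = (ξ k ⁻¹' {1})ᶜ := by
    ext ω
    have := hval k ω
    simp only [mem_preimage, mem_singleton_iff, mem_compl_iff]
    omega
  rw [h, measure_compl ((hmeas k) (measurableSet_singleton 1)) (measure_ne_top _ _),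
    measure_univ, show ξ k ⁻¹' {1} = {ω | ξ k ω = 1} from rfl, hlaw k]

lemma ae_infinite (hmeas : ∀ k, Measurable (ξ k))
    (hindep : iIndepFun ξ P)
    (hdiv : ¬ Summable δ) (hpos : ∀ k, 0 ≤ δ k)
    (hlaw : ∀ k, P {ω | ξ k ω = 1} = ENNReal.ofReal (δ k)) :
    ∀ᵐ ω ∂P, {k | ξ k ω = 1}.Infinite := by
  set E : ℕ → Set Ω := fun k => ξ k ⁻¹' {1} with hE
  have hEm : ∀ k, MeasurableSet (E k) := fun k => (hmeas k) (measurableSet_singleton 1)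
  have hEi : iIndepSet E P := by
    rw [iIndepSet_iff_meas_biInter hEm]
    intro s
    exact hindep.measure_inter_preimage_eq_mul s
      (sets := fun _ => ({1} : Set ℕ)) (fun i _ => measurableSet_singleton 1)
  have hEsum : (∑' k, P (E k)) = ⊤ := by
    by_contra h
    refine hdiv ?_
    have := ENNReal.summable_toReal h
    refine this.congr fun k => ?_
    simp only [hE, show ξ k ⁻¹' {1} = {ω | ξ k ω = 1} from rfl, hlaw k,
      ENNReal.toReal_ofReal (hpos k)]
  have h1 := ProbabilityTheory.measure_limsup_eq_one hEm hEi hEsum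
  have h2 : ∀ᵐ ω ∂P, ω ∈ limsup E atTop := by
    rw [ae_iff]
    have : {ω | ¬ ω ∈ limsup E atTop} = (limsup E atTop)ᶜ := rfl
    rw [this, measure_compl ((MeasurableSet.measurableSet_limsup hEm)) (measure_ne_top _ _), h1,
      measure_univ, tsub_self]
  filter_upwards [h2] with ω hω
  rw [mem_limsup_iff_frequently_mem] at hω
  rw [← Nat.frequently_atTop_iff_infinite]
  exact hω

lemma ae_blocks (hmeas : ∀ k, Measurable (ξ k))
    (hindep : iIndepFun ξ P)
    (hmono : Antitone δ) (hδ : ∀ k, 0 < δ k ∧ δ k < 1)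
    (hval : ∀ k ω, ξ k ω = 0 ∨ ξ k ω = 1)
    (hlaw : ∀ k, P {ω | ξ k ω = 1} = ENNReal.ofReal (δ k)) (M : ℕ) :
    ∀ᵐ ω ∂P, ∃ᶠ j in atTop, ∀ i, j * (M + 1) ≤ i → i < j * (M + 1) + (M + 1) → ξ i ω = 0 := by
  set block : ℕ → Finset ℕ := fun j => Finset.Ico (j * (M + 1)) (j * (M + 1) + (M + 1)) with hbl
  set A : ℕ → Set Ω := fun j => ⋂ i ∈ block j, ξ i ⁻¹' {0} with hA
  have hAm : ∀ j, MeasurableSet (A j) :=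
    fun j => Finset.measurableSet_biInter _ fun i _ => (hmeas i) (measurableSet_singleton 0)
  have hdisj : ∀ j j' : ℕ, j ≠ j' → Disjoint (block j) (block j') := by
    have key : ∀ j j' : ℕ, j < j' → Disjoint (block j) (block j') := by
      intro j j' h
      rw [Finset.disjoint_left]
      intro i hi hi'
      simp only [hbl, Finset.mem_Ico] at hi hi'
      have h2 : (j + 1) * (M + 1) ≤ j' * (M + 1) := Nat.mul_le_mul_right _ (by omega)
      rw [Nat.succ_mul] at h2
      omega
    intro j j' hne
    rcases lt_or_gt_of_ne hne with h | h
    · exact key j j' h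
    · exact (key j' j h).symm
  have hmeasA : ∀ j, P (A j) = ∏ i ∈ block j, P (ξ i ⁻¹' {0}) := fun j =>
    hindep.measure_inter_preimage_eq_mul (block j) (sets := fun _ => ({0} : Set ℕ))
      (fun i _ => measurableSet_singleton 0)
  have hAi : iIndepSet A P := by
    rw [iIndepSet_iff_meas_biInter hAm]
    intro S
    have hL : (⋂ j ∈ S, A j) = ⋂ i ∈ S.biUnion block, ξ i ⁻¹' {0} :=
      (Finset.set_biInter_biUnion S block _).symm
    rw [hL, hindep.measure_inter_preimage_eq_mul (S.biUnion block)
      (sets := fun _ => ({0} : Set ℕ)) (fun i _ => measurableSet_singleton 0),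
      Finset.prod_biUnion (fun j _ j' _ hne => hdisj j j' hne)]
    exact Finset.prod_congr rfl fun j _ => (hmeasA j).symm
  set c : ENNReal := (1 - ENNReal.ofReal (δ 0)) ^ (M + 1) with hc
  have hc0 : c ≠ 0 := by
    apply pow_ne_zero
    have : ENNReal.ofReal (δ 0) < 1 := ENNReal.ofReal_lt_one.mpr (hδ 0).2
    simp only [ne_eq, tsub_eq_zero_iff_le, not_le]
    exact this
  have hlb : ∀ j, c ≤ P (A j) := by
    intro j
    rw [hmeasA j, hc]
    have : ∀ i ∈ block j, (1 : ENNReal) - ENNReal.ofReal (δ 0) ≤ P (ξ i ⁻¹' {0}) := by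
      intro i _
      rw [law0 P δ ξ hmeas hval hlaw i]
      exact tsub_le_tsub_left (ENNReal.ofReal_le_ofReal (hmono (Nat.zero_le i))) 1
    calc (1 - ENNReal.ofReal (δ 0)) ^ (M + 1)
        = ∏ _i ∈ block j, (1 - ENNReal.ofReal (δ 0)) := by
          rw [Finset.prod_const, hbl, Nat.card_Ico]; congr 1; omega
      _ ≤ ∏ i ∈ block j, P (ξ i ⁻¹' {0}) := Finset.prod_le_prod' this
  have hAsum : (∑' j, P (A j)) = ⊤ := by
    rw [← top_le_iff, ← ENNReal.tsum_const_eq_top_of_ne_zero (α := ℕ) hc0]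
    exact ENNReal.tsum_le_tsum hlb
  have h1 := ProbabilityTheory.measure_limsup_eq_one hAm hAi hAsum
  have h2 : ∀ᵐ ω ∂P, ω ∈ limsup A atTop := by
    rw [ae_iff]
    have : {ω | ¬ ω ∈ limsup A atTop} = (limsup A atTop)ᶜ := rfl
    rw [this, measure_compl (MeasurableSet.measurableSet_limsup hAm) (measure_ne_top _ _), h1,
      measure_univ, tsub_self]
  filter_upwards [h2] with ω hω
  rw [mem_limsup_iff_frequently_mem] at hω
  refine hω.mono fun j hj i h1 h2 => ?_
  have : ω ∈ ξ i ⁻¹' {0} := by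
    have := Set.mem_iInter₂.mp hj i
    exact this (by simp [hbl, Finset.mem_Ico]; omega)
  simpa using this

lemma ae_noF (hmeas : ∀ k, Measurable (ξ k))
    (hindep : iIndepFun ξ P)
    (hmono : Antitone δ) (hδ : ∀ k, 0 < δ k ∧ δ k < 1)
    (hlaw : ∀ k, P {ω | ξ k ω = 1} = ENNReal.ofReal (δ k))
    (hsum2 : Summable (fun k => δ k ^ 2)) (M : ℕ) :
    ∀ᵐ ω ∂P, ∀ᶠ k in atTop, ¬ (ξ k ω = 1 ∧ ∃ j, 1 ≤ j ∧ j ≤ M ∧ ξ (k + j) ω = 1) := by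
  set F : ℕ → Set Ω := fun k => ⋃ j ∈ Finset.Icc 1 M, (ξ k ⁻¹' {1} ∩ ξ (k + j) ⁻¹' {1}) with hF
  have hbound : ∀ k, P (F k) ≤ (M : ENNReal) * ENNReal.ofReal (δ k ^ 2) := by
    intro k
    refine le_trans (measure_biUnion_finset_le _ _) ?_
    have hterm : ∀ j ∈ Finset.Icc 1 M,
        P (ξ k ⁻¹' {1} ∩ ξ (k + j) ⁻¹' {1}) ≤ ENNReal.ofReal (δ k ^ 2) := by
      intro j hj
      simp only [Finset.mem_Icc] at hj
      have hne : k ≠ k + j := by omega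
      rw [(hindep.indepFun hne).measure_inter_preimage_eq_mul {1} {1}
        (measurableSet_singleton 1) (measurableSet_singleton 1),
        show ξ k ⁻¹' {1} = {ω | ξ k ω = 1} from rfl,
        show ξ (k + j) ⁻¹' {1} = {ω | ξ (k + j) ω = 1} from rfl, hlaw, hlaw]
      calc ENNReal.ofReal (δ k) * ENNReal.ofReal (δ (k + j))
          ≤ ENNReal.ofReal (δ k) * ENNReal.ofReal (δ k) :=
            mul_le_mul_right (ENNReal.ofReal_le_ofReal (hmono (by omega))) _
        _ = ENNReal.ofReal (δ k ^ 2) := by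
            rw [← ENNReal.ofReal_mul (hδ k).1.le, sq]
    refine le_trans (Finset.sum_le_sum hterm) ?_
    rw [Finset.sum_const, Nat.card_Icc]
    simp [nsmul_eq_mul]
  have hFsum : (∑' k, P (F k)) ≠ ⊤ := by
    refine ne_top_of_le_ne_top ?_ (ENNReal.tsum_le_tsum hbound)
    rw [ENNReal.tsum_mul_left, ← ENNReal.ofReal_tsum_of_nonneg (fun k => sq_nonneg _) hsum2]
    exact ENNReal.mul_ne_top (ENNReal.natCast_ne_top M) ENNReal.ofReal_ne_top
  have h0 := MeasureTheory.measure_limsup_atTop_eq_zero hFsum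
  have h2 : ∀ᵐ ω ∂P, ω ∉ limsup F atTop := by
    rw [ae_iff]
    simpa [not_not] using h0
  filter_upwards [h2] with ω hω
  rw [mem_limsup_iff_frequently_mem, Filter.not_frequently] at hω
  refine hω.mono fun k hk hcon => ?_
  obtain ⟨h1, j, hj1, hjM, h2'⟩ := hcon
  refine hk ?_
  refine Set.mem_biUnion (show j ∈ Finset.Icc 1 M by simp [Finset.mem_Icc]; omega) ?_
  exact ⟨h1, h2'⟩

end auxiliary

/-- **Gaps of a random set of integers.**
Let `(δ_k)` be non-increasing with `0 < δ_k < 1` and `∑ δ_k = ∞`, and let `(ξ_k)`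
be independent with `P(ξ_k = 1) = δ_k`, `P(ξ_k = 0) = 1 − δ_k`.  Let
`R(ω) = {k : ξ_k(ω) = 1} = {u_0 < u_1 < ⋯}` (a.s. infinite), enumerated by `Nat.nth`.
Then (1) almost surely `limsup (u_{n+1} − u_n) = ∞`; and (2) if moreover
`∑ δ_k² < ∞`, then almost surely `u_{n+1} − u_n → ∞`. -/
theorem random_set_gaps {Ω : Type*} [MeasurableSpace Ω]
    (P : Measure Ω) [IsProbabilityMeasure P]
    (δ : ℕ → ℝ) (hmono : Antitone δ) (hδ : ∀ k, 0 < δ k ∧ δ k < 1)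
    (hdiv : ¬ Summable δ)
    (ξ : ℕ → Ω → ℕ) (hmeas : ∀ k, Measurable (ξ k))
    (hindep : iIndepFun ξ P)
    (hval : ∀ k ω, ξ k ω = 0 ∨ ξ k ω = 1)
    (hlaw : ∀ k, P {ω | ξ k ω = 1} = ENNReal.ofReal (δ k)) :
    (∀ᵐ ω ∂P, ∀ M : ℕ, ∀ N : ℕ, ∃ n : ℕ, N ≤ n ∧
        M ≤ Nat.nth (fun k => ξ k ω = 1) (n + 1) - Nat.nth (fun k => ξ k ω = 1) n) ∧
    (Summable (fun k => δ k ^ 2) →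
      ∀ᵐ ω ∂P, Tendsto
        (fun n : ℕ => Nat.nth (fun k => ξ k ω = 1) (n + 1) - Nat.nth (fun k => ξ k ω = 1) n)
        atTop atTop) := by
  have hinf := ae_infinite P δ ξ hmeas hindep hdiv (fun k => (hδ k).1.le) hlaw
  constructor
  · have hbl := ae_all_iff.mpr fun M => ae_blocks P δ ξ hmeas hindep hmono hδ hval hlaw M
    filter_upwards [hinf, hbl] with ω hω hωb
    intro M N
    set p : ℕ → Prop := fun k => ξ k ω = 1 with hp
    obtain ⟨j, hj, hjb⟩ := (frequently_atTop.mp (hωb M)) (Nat.nth p N + 1)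
    have ha : Nat.nth p N < j * (M + 1) := by
      have : j ≤ j * (M + 1) := Nat.le_mul_of_pos_right j (by omega)
      omega
    exact gap_aux1 p hω M N (j * (M + 1)) ha fun i h1 h2 hpi => by
      have := hjb i h1 h2
      rw [hp] at hpi
      omega
  · intro hsum2
    have hFa := ae_all_iff.mpr fun M => ae_noF P δ ξ hmeas hindep hmono hδ hlaw hsum2 M
    filter_upwards [hinf, hFa] with ω hω hωF
    refine gap_aux2 _ hω fun M => ?_
    obtain ⟨K, hK⟩ := eventually_atTop.mp (hωF M)
    exact ⟨K, hK⟩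
end
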